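/- Under the MMSB setup, the eigenvalues λ_1, …, λ_K of 𝓛_τ (ordered by decreasing magnitude) satisfy |λ_K| ≥ ρ |λ_K(P̃)| λ_K(Π'Π) / (τ + δ_max) and λ_1 = ‖𝓛_τ‖ ≤ δ_max / (τ + δ_max), where λ_K(P̃) is the smallest-in-magnitude eigenvalue of P̃ and λ_K(Π'Π) is the smallest eigenvalue of Π'Π. -/

import Mathlib

open Matrix BigOperators

/-- Euclidean norm of the `i`-th row of a matrix. -/
noncomputable def rowNorm {m k : ℕ} (M : Matrix (Fin m) (Fin k) ℝ) (i : Fin m) : ℝ :=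
  Real.sqrt (∑ j, (M i j) ^ 2)

/-- Spectral (operator ℓ₂) norm of a square real matrix. -/
noncomputable def specNorm {m : ℕ} (A : Matrix (Fin m) (Fin m) ℝ) : ℝ :=
  ‖Matrix.toEuclideanCLM (𝕜 := ℝ) A‖

lemma sum_smul_sq {m : ℕ} (c : ℝ) (v : Fin m → ℝ) :
    ∑ i, ((c • v) i) ^ 2 = c ^ 2 * ∑ i, v i ^ 2 := by
  rw [Finset.mul_sum]
  refine Finset.sum_congr rfl fun i _ => ?_
  have h : (c • v) i = c * v i := rfl
  rw [h, mul_pow]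

lemma key_ineq (c ρa Qu Qz E : ℝ) (hc : 0 ≤ c) (hρa : 0 ≤ ρa) (hQu : 0 < Qu) (hQz : 0 ≤ Qz)
    (h1 : c * Qu ≤ 1) (h2 : 1 ≤ Qu * Qz) (h3 : ρa ^ 2 * Qz ≤ E ^ 2 * Qu) :
    (ρa * c) ^ 2 ≤ E ^ 2 := by
  nlinarith [mul_le_mul_of_nonneg_right h3 hQu.le,
    mul_le_mul_of_nonneg_left h2 (sq_nonneg ρa),
    mul_le_mul h1 h1 (mul_nonneg hc hQu.le) zero_le_one,
    mul_pos hQu hQu, sq_nonneg (ρa * c), sq_nonneg E]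

lemma dot_mulVec_left {p q : ℕ} (A : Matrix (Fin p) (Fin q) ℝ) (v : Fin p → ℝ) (w : Fin q → ℝ) :
    v ⬝ᵥ (A *ᵥ w) = (Aᵀ *ᵥ v) ⬝ᵥ w := by
  simp only [dotProduct, mulVec, dotProduct, transpose_apply, Finset.mul_sum, Finset.sum_mul]
  rw [Finset.sum_comm]
  apply Finset.sum_congr rfl; intro i _; apply Finset.sum_congr rfl; intro j _; ring

lemma herm_quad {m : ℕ} (A : Matrix (Fin m) (Fin m) ℝ) (hA : A.IsHermitian) (lb : ℝ)
    (hlb : ∀ l, lb ≤ hA.eigenvalues l) (u : Fin m → ℝ) :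
    lb * (∑ i, u i ^ 2) ≤ u ⬝ᵥ (A *ᵥ u) := by
  set U : Matrix (Fin m) (Fin m) ℝ := (hA.eigenvectorUnitary : Matrix (Fin m) (Fin m) ℝ) with hUdef
  have hU2 : U * star U = 1 := Matrix.mem_unitaryGroup_iff.mp hA.eigenvectorUnitary.2
  have hstar : star U = Uᵀ := Matrix.conjTranspose_eq_transpose_of_trivial U
  set y : Fin m → ℝ := Uᵀ *ᵥ u with hy
  have hyy : y ⬝ᵥ y = u ⬝ᵥ u := by
    rw [hy, ← dot_mulVec_left U u (Uᵀ *ᵥ u), mulVec_mulVec, ← hstar, hU2, one_mulVec]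
  have hquad : u ⬝ᵥ (A *ᵥ u) = ∑ i, hA.eigenvalues i * y i ^ 2 := by
    conv_lhs => rw [hA.spectral_theorem]; simp only [Unitary.conjStarAlgAut_apply, Unitary.coe_star]
    rw [← hUdef, ← mulVec_mulVec, ← mulVec_mulVec, dot_mulVec_left, hstar]
    simp only [← hy, dotProduct]
    apply Finset.sum_congr rfl; intro i _
    rw [mulVec_diagonal]
    simp [RCLike.ofReal]
    ring
  rw [hquad]
  calc lb * ∑ i, u i ^ 2 = ∑ i, lb * y i ^ 2 := by
        rw [← Finset.mul_sum]
        congr 1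
        simpa [dotProduct, pow_two] using hyy.symm
    _ ≤ ∑ i, hA.eigenvalues i * y i ^ 2 :=
        Finset.sum_le_sum fun i _ => mul_le_mul_of_nonneg_right (hlb i) (sq_nonneg _)

lemma herm_sq {m : ℕ} (A : Matrix (Fin m) (Fin m) ℝ) (hA : A.IsHermitian) (lb : ℝ)
    (hlb0 : 0 ≤ lb) (hlb : ∀ l, lb ≤ |hA.eigenvalues l|) (z : Fin m → ℝ) :
    lb ^ 2 * (∑ i, z i ^ 2) ≤ ∑ i, ((A *ᵥ z) i) ^ 2 := by
  set U : Matrix (Fin m) (Fin m) ℝ := (hA.eigenvectorUnitary : Matrix (Fin m) (Fin m) ℝ) with hUdef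
  have hU2 : U * star U = 1 := Matrix.mem_unitaryGroup_iff.mp hA.eigenvectorUnitary.2
  have hU1 : star U * U = 1 := Matrix.mem_unitaryGroup_iff'.mp hA.eigenvectorUnitary.2
  have hstar : star U = Uᵀ := Matrix.conjTranspose_eq_transpose_of_trivial U
  set y : Fin m → ℝ := Uᵀ *ᵥ z with hy
  have hyy : y ⬝ᵥ y = z ⬝ᵥ z := by
    rw [hy, ← dot_mulVec_left U z (Uᵀ *ᵥ z), mulVec_mulVec, ← hstar, hU2, one_mulVec]
  have hq : ∀ w : Fin m → ℝ, (U *ᵥ w) ⬝ᵥ (U *ᵥ w) = w ⬝ᵥ w := by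
    intro w
    rw [dot_mulVec_left, mulVec_mulVec, ← hstar, hU1, one_mulVec]
  have hAz : A *ᵥ z = U *ᵥ (fun i => hA.eigenvalues i * y i) := by
    conv_lhs => rw [hA.spectral_theorem]; simp only [Unitary.conjStarAlgAut_apply, Unitary.coe_star]
    rw [← hUdef, ← mulVec_mulVec, ← mulVec_mulVec, hstar, ← hy]
    have : diagonal (RCLike.ofReal ∘ hA.eigenvalues) *ᵥ y = fun i => hA.eigenvalues i * y i := by
      ext i
      rw [mulVec_diagonal]
      simp [RCLike.ofReal]
    rw [this]
  have key : ∑ i, ((A *ᵥ z) i) ^ 2 = ∑ i, hA.eigenvalues i ^ 2 * y i ^ 2 := by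
    have h1 : ∑ i, ((A *ᵥ z) i) ^ 2 = (A *ᵥ z) ⬝ᵥ (A *ᵥ z) := by
      simp [dotProduct, pow_two]
    rw [h1, hAz, hq]
    simp [dotProduct, pow_two]; apply Finset.sum_congr rfl; intro i _; ring
  rw [key]
  have hz2 : ∑ i, z i ^ 2 = ∑ i, y i ^ 2 := by
    simpa [dotProduct, pow_two] using hyy.symm
  rw [hz2, Finset.mul_sum]
  refine Finset.sum_le_sum fun i _ => ?_
  have : lb ^ 2 ≤ hA.eigenvalues i ^ 2 := by
    have := hlb i
    calc lb ^ 2 ≤ |hA.eigenvalues i| ^ 2 := by nlinarith [abs_nonneg (hA.eigenvalues i)]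
      _ = hA.eigenvalues i ^ 2 := sq_abs _
  exact mul_le_mul_of_nonneg_right this (sq_nonneg _)

/-- Lemma B.4: the eigenvalues of `𝓛_τ` satisfy
`|λ_K| ≥ ρ |λ_K(P̃)| λ_K(Π'Π) / (τ+δ_max)` and `λ₁ = ‖𝓛_τ‖ ≤ δ_max/(τ+δ_max)`, where the
eigenvalues are ordered by decreasing magnitude (so `|λ_K| = min_k |e k|` and
`λ₁ = max_k |e k|`). -/
theorem stmt_11
    {n K : ℕ} (hn : 0 < n) (hK : 0 < K) (hKn : K ≤ n)
    (Pi : Matrix (Fin n) (Fin K) ℝ)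
    (hPi_nonneg : ∀ i k, 0 ≤ Pi i k)
    (hPi_rowsum : ∀ i, ∑ k, Pi i k = 1)
    (hPi_rank : Pi.rank = K)
    (hpure : ∀ k : Fin K, ∃ i : Fin n, ∀ l, Pi i l = if l = k then 1 else 0)
    (Pt : Matrix (Fin K) (Fin K) ℝ)
    (hPt_symm : Pt.IsSymm)
    (hPt_nonneg : ∀ k l, 0 ≤ Pt k l)
    (hPt_rank : Pt.rank = K)
    (hPt_le_one : ∀ k l, Pt k l ≤ 1)
    (hPt_max : ∃ k l, Pt k l = 1)
    (ρ τ : ℝ) (hρ0 : 0 < ρ) (hρ1 : ρ ≤ 1) (hτ : 0 ≤ τ)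
    (Om : Matrix (Fin n) (Fin n) ℝ) (hOm : Om = Pi * (ρ • Pt) * Piᵀ)
    (deg : Fin n → ℝ) (hdeg : ∀ i, deg i = ∑ j, Om i j)
    (hpos : ∀ i, 0 < deg i + τ)
    (Ltau : Matrix (Fin n) (Fin n) ℝ)
    (hLtau : Ltau = Matrix.diagonal (fun i => (Real.sqrt (deg i + τ))⁻¹) * Om *
      Matrix.diagonal (fun i => (Real.sqrt (deg i + τ))⁻¹))
    (Idx : Fin K → Fin n) (hIdx : Pi.submatrix Idx id = 1)
    (V : Matrix (Fin n) (Fin K) ℝ) (e : Fin K → ℝ)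
    (hVorth : Vᵀ * V = 1) (he : ∀ k, e k ≠ 0)
    (hVE : Ltau = V * Matrix.diagonal e * Vᵀ)
    (hPtHerm : Pt.IsHermitian)
    (hH : (Piᵀ * Pi).IsHermitian) :
    ρ * (⨅ l, |hPtHerm.eigenvalues l|) * (⨅ m, hH.eigenvalues m) / (τ + ⨆ j, deg j) ≤
      (⨅ k, |e k|) ∧
    (⨆ k, |e k|) = specNorm Ltau ∧
    specNorm Ltau ≤ (⨆ j, deg j) / (τ + ⨆ j, deg j) := by
  haveI : NeZero n := ⟨hn.ne'⟩
  haveI : NeZero K := ⟨hK.ne'⟩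
  set δ : ℝ := ⨆ j, deg j with hδdef
  set s : Fin n → ℝ := fun i => (Real.sqrt (deg i + τ))⁻¹ with hsdef
  have hs_pos : ∀ i, 0 < s i := fun i => inv_pos.2 (Real.sqrt_pos.2 (hpos i))
  have hs2 : ∀ i, s i ^ 2 = (deg i + τ)⁻¹ := by
    intro i
    rw [hsdef]
    simp only []
    rw [← Real.sqrt_inv, Real.sq_sqrt (inv_nonneg.2 (hpos i).le)]
  have hOm_nn : ∀ i j, 0 ≤ Om i j := by
    intro i j
    rw [hOm]
    rw [mul_apply]
    refine Finset.sum_nonneg fun b _ => mul_nonneg ?_ (hPi_nonneg j b)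
    rw [mul_apply]
    exact Finset.sum_nonneg fun c _ => mul_nonneg (hPi_nonneg i c)
      (mul_nonneg hρ0.le (hPt_nonneg c b))
  have hdeg_nn : ∀ i, 0 ≤ deg i := fun i =>
    (hdeg i) ▸ Finset.sum_nonneg fun j _ => hOm_nn i j
  have hle : ∀ i, deg i ≤ δ := fun i => le_ciSup (Set.Finite.bddAbove (Set.finite_range deg)) i
  have hδ0 : 0 ≤ δ := le_trans (hdeg_nn ⟨0, hn⟩) (hle ⟨0, hn⟩)
  have hτδ : 0 < τ + δ := by have h1 := hpos ⟨0, hn⟩; have h2 := hle ⟨0, hn⟩; linarith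
  -- eigenvector columns
  set x : Fin K → Fin n → ℝ := fun k i => V i k with hxdef
  have hxunit : ∀ k, ∑ i, x k i ^ 2 = 1 := by
    intro k
    have h := congrFun (congrFun hVorth k) k
    simp only [mul_apply, transpose_apply, one_apply_eq] at h
    simpa [hxdef, pow_two] using h
  have hxcol : ∀ k, x k = V *ᵥ _root_.Pi.single k 1 := by
    intro k; ext i; simp [hxdef, mulVec_single]
  have hdiagsingle : ∀ k, diagonal e *ᵥ _root_.Pi.single k 1
      = e k • (_root_.Pi.single k 1 : Fin K → ℝ) := by
    intro k; ext l
    rw [mulVec_diagonal]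
    by_cases h : l = k <;> simp [h, _root_.Pi.single_apply]
  have hxeig : ∀ k, Ltau *ᵥ x k = e k • x k := by
    intro k
    rw [hVE, hxcol k, mulVec_mulVec, Matrix.mul_assoc (V * diagonal e) Vᵀ V, hVorth, Matrix.mul_one,
      ← mulVec_mulVec, hdiagsingle, mulVec_smul]
  have hVq : ∀ w : Fin K → ℝ, (V *ᵥ w) ⬝ᵥ (V *ᵥ w) = w ⬝ᵥ w := by
    intro w
    rw [dot_mulVec_left, mulVec_mulVec, hVorth, one_mulVec]
  -- part 3 per-k bound
  have hbound : ∀ k, |e k| ≤ δ / (τ + δ) := by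
    intro k
    set y : Fin n → ℝ := fun i => s i * x k i with hydef
    have hDx : diagonal s *ᵥ x k = y := by ext i; rw [mulVec_diagonal]
    have h1 : ∀ i, s i * (Om *ᵥ y) i = e k * x k i := by
      intro i
      have h := congrFun (hxeig k) i
      rw [hLtau] at h
      rw [← mulVec_mulVec, ← mulVec_mulVec, hDx] at h
      have h' : (diagonal s *ᵥ (Om *ᵥ y)) i = s i * (Om *ᵥ y) i := mulVec_diagonal _ _ _
      rw [h'] at h
      simpa using h
    have hrel : ∀ i, e k * y i = (deg i + τ)⁻¹ * ∑ j, Om i j * y j := by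
      intro i
      have := h1 i
      have h2 : e k * y i = s i * (s i * (Om *ᵥ y) i) := by
        rw [this, hydef]; ring
      rw [h2, ← mul_assoc, ← pow_two, hs2 i]
      congr 1
    obtain ⟨i0, -, hmax⟩ := Finset.exists_max_image Finset.univ (fun i => |y i|)
      ⟨⟨0, hn⟩, Finset.mem_univ _⟩
    have hyne : ∃ i, y i ≠ 0 := by
      by_contra hcon
      push_neg at hcon
      have : ∑ i, x k i ^ 2 = 0 := by
        apply Finset.sum_eq_zero
        intro i _
        have := hcon i
        rw [hydef] at this
        simp only at this
        have := mul_eq_zero.mp this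
        rcases this with h | h
        · exact absurd h (hs_pos i).ne'
        · rw [h]; ring
      rw [hxunit k] at this; norm_num at this
    obtain ⟨i1, hi1⟩ := hyne
    have hc : 0 < |y i0| := lt_of_lt_of_le (abs_pos.2 hi1) (hmax i1 (Finset.mem_univ _))
    have hstep : |e k| * |y i0| ≤ (deg i0 + τ)⁻¹ * (deg i0 * |y i0|) := by
      have := hrel i0
      have habs : |e k * y i0| = (deg i0 + τ)⁻¹ * |∑ j, Om i0 j * y j| := by
        rw [this, abs_mul, abs_of_nonneg (inv_nonneg.2 (hpos i0).le)]
      rw [← abs_mul, habs]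
      apply mul_le_mul_of_nonneg_left _ (inv_nonneg.2 (hpos i0).le)
      calc |∑ j, Om i0 j * y j| ≤ ∑ j, |Om i0 j * y j| := Finset.abs_sum_le_sum_abs _ _
        _ ≤ ∑ j, Om i0 j * |y i0| := by
            refine Finset.sum_le_sum fun j _ => ?_
            rw [abs_mul, abs_of_nonneg (hOm_nn i0 j)]
            exact mul_le_mul_of_nonneg_left (hmax j (Finset.mem_univ _)) (hOm_nn i0 j)
        _ = deg i0 * |y i0| := by rw [← Finset.sum_mul, ← hdeg i0]
    have h3 : |e k| ≤ deg i0 / (deg i0 + τ) := by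
      have h4 : (deg i0 + τ)⁻¹ * (deg i0 * |y i0|) = (deg i0 / (deg i0 + τ)) * |y i0| := by
        field_simp
      rw [h4] at hstep
      exact le_of_mul_le_mul_right hstep hc
    refine h3.trans ?_
    rw [div_le_div_iff₀ (hpos i0) hτδ]
    nlinarith [hle i0, hdeg_nn i0]
  -- sup of |e k|
  have hbddS := Set.Finite.bddAbove (Set.finite_range (fun k => |e k|))
  have hSk : ∀ k, |e k| ≤ ⨆ k, |e k| := fun k => le_ciSup hbddS k
  have hS0 : 0 ≤ ⨆ k, |e k| := le_trans (abs_nonneg _) (hSk ⟨0, hK⟩)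
  -- quadratic bound for part 2
  have hq2 : ∀ xv : Fin n → ℝ,
      ∑ i, ((Ltau *ᵥ xv) i) ^ 2 ≤ (⨆ k, |e k|) ^ 2 * ∑ i, xv i ^ 2 := by
    intro xv
    set yv : Fin K → ℝ := Vᵀ *ᵥ xv with hyv
    have hLx : Ltau *ᵥ xv = V *ᵥ (diagonal e *ᵥ yv) := by
      rw [hVE, ← mulVec_mulVec, ← mulVec_mulVec]
    have h1 : ∑ i, ((Ltau *ᵥ xv) i) ^ 2 = ∑ l, (e l * yv l) ^ 2 := by
      have := hVq (diagonal e *ᵥ yv)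
      rw [hLx]
      have e1 : ∑ i, ((V *ᵥ (diagonal e *ᵥ yv)) i) ^ 2
          = (V *ᵥ (diagonal e *ᵥ yv)) ⬝ᵥ (V *ᵥ (diagonal e *ᵥ yv)) := by
        simp [dotProduct, pow_two]
      rw [e1, this]
      simp only [dotProduct, mulVec_diagonal, pow_two]
    have h2 : ∑ l, (e l * yv l) ^ 2 ≤ (⨆ k, |e k|) ^ 2 * ∑ l, yv l ^ 2 := by
      rw [Finset.mul_sum]
      refine Finset.sum_le_sum fun l _ => ?_
      rw [mul_pow, ← sq_abs (e l)]
      exact mul_le_mul_of_nonneg_right (pow_le_pow_left₀ (abs_nonneg _) (hSk l) 2) (sq_nonneg _)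
    have h3 : ∑ l, yv l ^ 2 ≤ ∑ i, xv i ^ 2 := by
      set t := ∑ l, yv l ^ 2 with ht
      have ht0 : 0 ≤ t := Finset.sum_nonneg fun l _ => sq_nonneg _
      have htd : t = xv ⬝ᵥ (V *ᵥ yv) := by
        rw [dot_mulVec_left, ← hyv, ht]
        simp [dotProduct, pow_two]
      have hcs : t ^ 2 ≤ (∑ i, xv i ^ 2) * t := by
        have := Finset.sum_mul_sq_le_sq_mul_sq Finset.univ xv (V *ᵥ yv)
        have hVy : ∑ i, ((V *ᵥ yv) i) ^ 2 = t := by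
          have := hVq yv
          have e1 : ∑ i, ((V *ᵥ yv) i) ^ 2 = (V *ᵥ yv) ⬝ᵥ (V *ᵥ yv) := by
            simp [dotProduct, pow_two]
          rw [e1, this, ht]
          simp [dotProduct, pow_two]
        calc t ^ 2 = (∑ i, xv i * (V *ᵥ yv) i) ^ 2 := by rw [htd]; rfl
          _ ≤ (∑ i, xv i ^ 2) * ∑ i, ((V *ᵥ yv) i) ^ 2 := this
          _ = (∑ i, xv i ^ 2) * t := by rw [hVy]
      rcases eq_or_lt_of_le ht0 with h | h
      · rw [← h]; exact Finset.sum_nonneg fun i _ => sq_nonneg _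
      · nlinarith
    calc ∑ i, ((Ltau *ᵥ xv) i) ^ 2 = ∑ l, (e l * yv l) ^ 2 := h1
      _ ≤ (⨆ k, |e k|) ^ 2 * ∑ l, yv l ^ 2 := h2
      _ ≤ (⨆ k, |e k|) ^ 2 * ∑ i, xv i ^ 2 :=
          mul_le_mul_of_nonneg_left h3 (sq_nonneg _)
  -- bridge to the CLM world
  have hnorm_symm : ∀ v : Fin n → ℝ,
      ‖(WithLp.equiv 2 (Fin n → ℝ)).symm v‖ = Real.sqrt (∑ i, v i ^ 2) := by
    intro v
    rw [EuclideanSpace.norm_eq]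
    congr 1
    refine Finset.sum_congr rfl fun i _ => ?_
    rw [WithLp.equiv_symm_apply, PiLp.toLp_apply, Real.norm_eq_abs, sq_abs]
  have happ : ∀ v : Fin n → ℝ,
      Matrix.toEuclideanCLM (𝕜 := ℝ) Ltau ((WithLp.equiv 2 (Fin n → ℝ)).symm v)
        = (WithLp.equiv 2 (Fin n → ℝ)).symm (Ltau *ᵥ v) := by
    intro v
    rw [WithLp.equiv_symm_apply, Matrix.toEuclideanCLM_toLp]
  -- claim 2
  have claim2 : (⨆ k, |e k|) = specNorm Ltau := by
    refine le_antisymm (ciSup_le fun k => ?_) ?_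
    · have hX : ‖(WithLp.equiv 2 (Fin n → ℝ)).symm (x k)‖ = 1 := by
        rw [hnorm_symm, hxunit k, Real.sqrt_one]
      have hfX : ‖Matrix.toEuclideanCLM (𝕜 := ℝ) Ltau
          ((WithLp.equiv 2 (Fin n → ℝ)).symm (x k))‖ = |e k| := by
        rw [happ, hxeig k, hnorm_symm]
        have h5 : ∑ i, ((e k • x k) i) ^ 2 = e k ^ 2 := by
          rw [sum_smul_sq, hxunit k, mul_one]
        rw [h5, Real.sqrt_sq_eq_abs]
      calc |e k| = ‖Matrix.toEuclideanCLM (𝕜 := ℝ) Ltau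
            ((WithLp.equiv 2 (Fin n → ℝ)).symm (x k))‖ := hfX.symm
        _ ≤ ‖Matrix.toEuclideanCLM (𝕜 := ℝ) Ltau‖ * ‖(WithLp.equiv 2 (Fin n → ℝ)).symm (x k)‖ :=
            (Matrix.toEuclideanCLM (𝕜 := ℝ) Ltau).le_opNorm _
        _ = specNorm Ltau := by rw [hX, mul_one]; rfl
    · show ‖Matrix.toEuclideanCLM (𝕜 := ℝ) Ltau‖ ≤ _
      refine ContinuousLinearMap.opNorm_le_bound _ hS0 fun X => ?_
      have hXv : X = (WithLp.equiv 2 (Fin n → ℝ)).symm (WithLp.equiv 2 (Fin n → ℝ) X) :=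
        ((WithLp.equiv 2 (Fin n → ℝ)).symm_apply_apply X).symm
      rw [hXv, happ, hnorm_symm, hnorm_symm]
      set v : Fin n → ℝ := WithLp.equiv 2 (Fin n → ℝ) X
      calc Real.sqrt (∑ i, ((Ltau *ᵥ v) i) ^ 2)
          ≤ Real.sqrt ((⨆ k, |e k|) ^ 2 * ∑ i, v i ^ 2) := Real.sqrt_le_sqrt (hq2 v)
        _ = (⨆ k, |e k|) * Real.sqrt (∑ i, v i ^ 2) := by
            rw [Real.sqrt_mul (sq_nonneg _), Real.sqrt_sq hS0]
  -- claim 3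
  have claim3 : specNorm Ltau ≤ δ / (τ + δ) := by
    rw [← claim2]
    exact ciSup_le hbound
  -- part 1
  have hPiPSD : (Piᵀ * Pi).PosSemidef := by
    have h := Matrix.posSemidef_conjTranspose_mul_self Pi
    rwa [Matrix.conjTranspose_eq_transpose_of_trivial] at h
  set a : ℝ := ⨅ l, |hPtHerm.eigenvalues l| with hadef
  set b : ℝ := ⨅ m, hH.eigenvalues m with hbdef
  have ha0 : 0 ≤ a := le_ciInf fun l => abs_nonneg _
  have hb0 : 0 ≤ b := le_ciInf fun m => hPiPSD.eigenvalues_nonneg m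
  have hlow : ∀ k, ρ * a * b / (τ + δ) ≤ |e k| := by
    intro k
    set y : Fin n → ℝ := fun i => s i * x k i with hydef
    set z : Fin K → ℝ := Piᵀ *ᵥ y with hzdef
    set u : Fin K → ℝ := (e k)⁻¹ • ((ρ • Pt) *ᵥ z) with hudef
    have hMz : (ρ • Pt) *ᵥ z = e k • u := by
      rw [hudef, smul_smul, mul_inv_cancel₀ (he k), one_smul]
    have hDx : diagonal s *ᵥ x k = y := by ext i; rw [mulVec_diagonal]
    have hxu : ∀ i, s i * (Pi *ᵥ u) i = x k i := by
      have h := hxeig k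
      rw [hLtau, hOm] at h
      simp only [← mulVec_mulVec] at h
      rw [hDx, ← hzdef, hMz, mulVec_smul, mulVec_smul] at h
      have h2 : diagonal s *ᵥ (Pi *ᵥ u) = x k := smul_right_injective (Fin n → ℝ) (he k) h
      intro i
      rw [← congrFun h2 i, mulVec_diagonal]
    have hyu : ∀ i, y i = s i ^ 2 * (Pi *ᵥ u) i := by
      intro i; rw [hydef]; simp only; rw [← hxu i]; ring
    have hPudot : (Pi *ᵥ u) ⬝ᵥ y = 1 := by
      have h6 : ∀ i, (Pi *ᵥ u) i * y i = x k i ^ 2 := by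
        intro i; rw [hydef]; simp only; rw [← hxu i]; ring
      simp only [dotProduct]
      rw [Finset.sum_congr rfl (fun i _ => h6 i), hxunit k]
    have huz : u ⬝ᵥ z = 1 := by
      rw [hzdef, dot_mulVec_left, transpose_transpose, hPudot]
    have hq_uz : b / (τ + δ) * (∑ l, u l ^ 2) ≤ 1 := by
      rw [← huz, hzdef, dot_mulVec_left, transpose_transpose]
      have e1 : (Pi *ᵥ u) ⬝ᵥ y = ∑ i, s i ^ 2 * ((Pi *ᵥ u) i) ^ 2 := by
        simp only [dotProduct]
        refine Finset.sum_congr rfl fun i _ => ?_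
        rw [hyu i]; ring
      rw [e1]
      have e3 : b * (∑ l, u l ^ 2) ≤ ∑ i, ((Pi *ᵥ u) i) ^ 2 := by
        have h7 := herm_quad (Piᵀ * Pi) hH b
          (fun m => ciInf_le (Set.Finite.bddBelow (Set.finite_range _)) m) u
        refine le_trans h7 ?_
        rw [← mulVec_mulVec, dot_mulVec_left, transpose_transpose]
        simp [dotProduct, pow_two]
      have e2 : (τ + δ)⁻¹ * ∑ i, ((Pi *ᵥ u) i) ^ 2 ≤ ∑ i, s i ^ 2 * ((Pi *ᵥ u) i) ^ 2 := by
        rw [Finset.mul_sum]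
        refine Finset.sum_le_sum fun i _ => ?_
        refine mul_le_mul_of_nonneg_right ?_ (sq_nonneg _)
        rw [hs2 i]
        exact inv_anti₀ (hpos i) (by linarith [hle i])
      calc b / (τ + δ) * (∑ l, u l ^ 2) = (τ + δ)⁻¹ * (b * ∑ l, u l ^ 2) := by ring
        _ ≤ (τ + δ)⁻¹ * ∑ i, ((Pi *ᵥ u) i) ^ 2 :=
            mul_le_mul_of_nonneg_left e3 (inv_nonneg.2 hτδ.le)
        _ ≤ ∑ i, s i ^ 2 * ((Pi *ᵥ u) i) ^ 2 := e2
    have hqu_pos : 0 < ∑ l, u l ^ 2 := by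
      rcases (Finset.sum_nonneg fun l (_ : l ∈ Finset.univ) => sq_nonneg (u l)).lt_or_eq with h | h
      · exact h
      · exfalso
        have hu0 : ∀ l, u l = 0 := by
          intro l
          have h8 := (Finset.sum_eq_zero_iff_of_nonneg
            (fun l (_ : l ∈ Finset.univ) => sq_nonneg (u l))).1 h.symm l (Finset.mem_univ l)
          exact pow_eq_zero_iff two_ne_zero |>.mp h8
        have hx0 : ∀ i, x k i = 0 := by
          intro i
          rw [← hxu i]
          have h9 : (Pi *ᵥ u) i = 0 := by simp [mulVec, dotProduct, hu0]
          rw [h9, mul_zero]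
        have h10 := hxunit k
        simp only [hx0] at h10
        norm_num at h10
    have hcs : 1 ≤ (∑ l, u l ^ 2) * (∑ l, z l ^ 2) := by
      have h11 := Finset.sum_mul_sq_le_sq_mul_sq Finset.univ u z
      have h12 : (∑ l, u l * z l) = 1 := huz
      calc (1 : ℝ) = (∑ l, u l * z l) ^ 2 := by rw [h12]; norm_num
        _ ≤ _ := h11
    have hherm2 := herm_sq Pt hPtHerm a ha0
      (fun l => ciInf_le (Set.Finite.bddBelow (Set.finite_range _)) l) z
    have hMz2 : ∑ l, (((ρ • Pt) *ᵥ z) l) ^ 2 = e k ^ 2 * ∑ l, u l ^ 2 := by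
      rw [hMz, sum_smul_sq]
    have hMz3 : ∑ l, (((ρ • Pt) *ᵥ z) l) ^ 2 = ρ ^ 2 * ∑ l, ((Pt *ᵥ z) l) ^ 2 := by
      have h13 : (ρ • Pt) *ᵥ z = ρ • (Pt *ᵥ z) := by rw [smul_mulVec]
      rw [h13, sum_smul_sq]
    have hkey : ρ ^ 2 * (a ^ 2 * ∑ l, z l ^ 2) ≤ e k ^ 2 * ∑ l, u l ^ 2 := by
      rw [← hMz2, hMz3]
      exact mul_le_mul_of_nonneg_left hherm2 (sq_nonneg ρ)
    have hc0 : 0 ≤ b / (τ + δ) := div_nonneg hb0 hτδ.le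
    have hQz0 : 0 ≤ ∑ l, z l ^ 2 := Finset.sum_nonneg fun l _ => sq_nonneg _
    have hsq : (ρ * a * (b / (τ + δ))) ^ 2 ≤ e k ^ 2 := by
      have h3 : (ρ * a) ^ 2 * (∑ l, z l ^ 2) ≤ e k ^ 2 * (∑ l, u l ^ 2) := by
        have h14 : (ρ * a) ^ 2 * (∑ l, z l ^ 2) = ρ ^ 2 * (a ^ 2 * ∑ l, z l ^ 2) := by ring
        rw [h14]; exact hkey
      exact key_ineq (b / (τ + δ)) (ρ * a) (∑ l, u l ^ 2) (∑ l, z l ^ 2) (e k)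
        hc0 (mul_nonneg hρ0.le ha0) hqu_pos hQz0 hq_uz hcs h3
    have hfin : ρ * a * b / (τ + δ) = ρ * a * (b / (τ + δ)) := by ring
    rw [hfin, ← Real.sqrt_sq (by positivity : (0:ℝ) ≤ ρ * a * (b / (τ + δ))),
      ← Real.sqrt_sq_eq_abs]
    exact Real.sqrt_le_sqrt hsq
  exact ⟨le_ciInf hlow, claim2, claim3⟩
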